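/- Define E on (2^ℕ)^ω by: x E y iff x(0) = y(0) and x(j+1) = y(j+1) for all j with x(0)(j) = 0. Then for no perfect product P ⊆ (2^ℕ)^ω and no U ⊆ ω does E restricted to P coincide with the multiequality Δ_U (where x Δ_U y iff x ↾ U = y ↾ U). -/
import Mathlib


/-- Cantor space `2^ℕ`. -/
abbrev Cantor := ℕ → Bool

/-- A perfect subset of Cantor space: nonempty, closed, no isolated points. -/
def PerfectSet (X : Set Cantor) : Prop := X.Nonempty ∧ Perfect X

/-- The length of the stem of `X`: the length of the longest finite binary string
that is an initial segment of every element of `X`. -/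
noncomputable def stemLen (X : Set Cantor) : ℕ :=
  sSup {n | ∀ x ∈ X, ∀ y ∈ X, ∀ i < n, x i = y i}

/-- Simple splitting piece `X^i = {x ∈ X | x(|stem X|) = i}`. -/
noncomputable def splitPiece (X : Set Cantor) (i : Bool) : Set Cantor :=
  {x ∈ X | x (stemLen X) = i}

/-- Iterated simple splitting `X_s`: `X_Λ = X`, `X_{s⌢i} = (X_s)^i`. -/
noncomputable def iterSplit (X : Set Cantor) (s : List Bool) : Set Cantor :=
  s.foldl splitPiece X

/-- Refinement `X ≤ₙ Y`: `X_s ⊆ Y_s` for every binary string `s` of length `n`. -/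
def refines (n : ℕ) (X Y : Set Cantor) : Prop :=
  ∀ s : List Bool, s.length = n → iterSplit X s ⊆ iterSplit Y s

/-- The perfect product `∏_k P(k) ⊆ (2^ℕ)^ω` determined by coordinatewise sets. -/
def prodSet (P : ℕ → Set Cantor) : Set (ℕ → Cantor) := {x | ∀ k, x k ∈ P k}

/-- `P` is a perfect product (given by its coordinates `P k`). -/
def PerfectProduct (P : ℕ → Set Cantor) : Prop := ∀ k, PerfectSet (P k)

/-- `q(m,j) = |{k < m : φ(k) = j}|`. -/
def qcount (phi : ℕ → ℕ) (m j : ℕ) : ℕ :=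
  ((Finset.range m).filter fun k => phi k = j).card

/-- `σ/j`: the substring of `σ` read along the positions `k < |σ|` with `φ(k) = j`. -/
def subAlong (phi : ℕ → ℕ) (j : ℕ) (σ : List Bool) : List Bool :=
  ((List.range σ.length).filter fun k => phi k = j).map fun k => σ.getD k false

/-- The split piece `P_σ` of a perfect product, coordinatewise: `P_σ(j) = (P(j))_{σ/j}`. -/
noncomputable def prodSplit (phi : ℕ → ℕ) (P : ℕ → Set Cantor) (σ : List Bool) :
    ℕ → Set Cantor :=
  fun j => iterSplit (P j) (subAlong phi j σ)

/-- Refinement of perfect products: `P ≤ₘ Q` iff `P(j) ≤_{q(m,j)} Q(j)` for all `j`. -/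
def prodRef (phi : ℕ → ℕ) (m : ℕ) (P Q : ℕ → Set Cantor) : Prop :=
  ∀ j, refines (qcount phi m j) (P j) (Q j)

/-- `D(σ,τ) = ω \ {φ(i) : i < m, σ(i) ≠ τ(i)}` (for strings of length `m`). -/
def Dset (phi : ℕ → ℕ) (m : ℕ) (σ τ : List Bool) : Set ℕ :=
  {j | ¬ ∃ i < m, σ.getD i false ≠ τ.getD i false ∧ phi i = j}

/-- The equivalence relation of Example 2.2: `x E y` iff `x(0) = y(0)` and
`x(j+1) = y(j+1)` for all `j` with `x(0)(j) = 0` (i.e. `= false`). -/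
def Erel (x y : ℕ → Cantor) : Prop :=
  x 0 = y 0 ∧ ∀ j, x 0 j = false → x (j + 1) = y (j + 1)


lemma two_pts {X : Set Cantor} (h : PerfectSet X) : ∃ a ∈ X, ∃ b ∈ X, a ≠ b := by
  obtain ⟨hne, hp⟩ := h
  obtain ⟨C₀, C₁, ⟨hC₀, h0ne, h0sub⟩, ⟨hC₁, h1ne, h1sub⟩, hdisj⟩ := hp.splitting hne
  obtain ⟨a, ha⟩ := h0ne
  obtain ⟨b, hb⟩ := h1ne
  refine ⟨a, h0sub ha, b, h1sub hb, fun hab => ?_⟩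
  exact Set.disjoint_left.mp hdisj ha (hab ▸ hb)

/-- on no perfect product `P` does `E` coincide with a
multiequality `Δ_U` (`x Δ_U y` iff `x(k) = y(k)` for all `k ∈ U`). -/
theorem stmt14 :
    ¬ ∃ (P : ℕ → Set Cantor) (U : Set ℕ), PerfectProduct P ∧
      ∀ x ∈ prodSet P, ∀ y ∈ prodSet P, (Erel x y ↔ ∀ k ∈ U, x k = y k) := by
  rintro ⟨P, U, hP, hiff⟩
  choose c hc using fun k => (hP k).1
  obtain ⟨p, hp, q, hq, hpq⟩ := two_pts (hP 0)
  apply hpq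
  funext j
  obtain ⟨u, hu, v, hv, huv⟩ := two_pts (hP (j + 1))
  set X : Cantor → Cantor → (ℕ → Cantor) :=
    fun a w k => if k = 0 then a else if k = j + 1 then w else c k with hX
  have hmem : ∀ a ∈ P 0, ∀ w ∈ P (j + 1), X a w ∈ prodSet P := by
    intro a ha w hw k
    simp only [hX]
    split
    · next h => subst h; exact ha
    · split
      · next h => subst h; exact hw
      · exact hc k
  have hX0 : ∀ a w, X a w 0 = a := fun a w => by simp [hX]
  have hXj : ∀ a w, X a w (j + 1) = w := fun a w => by
    simp [hX, Nat.succ_ne_zero]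
  have hXk : ∀ a w w' k, k ≠ j + 1 → X a w k = X a w' k := by
    intro a w w' k hk
    simp [hX, hk]
  -- case 1: a j = false implies j+1 ∈ U
  have case1 : ∀ a ∈ P 0, a j = false → (j + 1) ∈ U := by
    intro a ha haj
    have hne : ¬ Erel (X a u) (X a v) := by
      rintro ⟨-, h2⟩
      have := h2 j (by rw [hX0]; exact haj)
      rw [hXj, hXj] at this
      exact huv this
    have := (hiff _ (hmem a ha u hu) _ (hmem a ha v hv)).not.mp hne
    push_neg at this
    obtain ⟨k, hkU, hkne⟩ := this
    by_cases hk : k = j + 1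
    · exact hk ▸ hkU
    · exact absurd (hXk a u v k hk) hkne
  -- case 2: a j = true implies j+1 ∉ U
  have case2 : ∀ a ∈ P 0, a j = true → (j + 1) ∉ U := by
    intro a ha haj hU
    have he : Erel (X a u) (X a v) := by
      refine ⟨by rw [hX0, hX0], fun j' hj' => ?_⟩
      rw [hX0] at hj'
      have hjj : j' ≠ j := by rintro rfl; rw [haj] at hj'; exact Bool.true_eq_false.mp hj'
      exact hXk a u v (j' + 1) (by omega)
    have := (hiff _ (hmem a ha u hu) _ (hmem a ha v hv)).mp he (j + 1) hU
    rw [hXj, hXj] at this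
    exact huv this
  cases hpj : p j <;> cases hqj : q j
  · rfl
  · exact absurd (case1 p hp hpj) (case2 q hq hqj)
  · exact absurd (case1 q hq hqj) (case2 p hp hpj)
  · rfl
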